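/- Let G be a long-refinement graph, p minimal with all classes of π^p of size at most 2, ≺ the splitting order on the pairs, P_1 the first pair, and P_a, P_b (1 < a < b) the pairs from the split of C_{p-1}. Then the pair P_2 (second in the splitting order) is distinct from P_a and from P_b, and consequently π^p contains at least 4 pairs. -/
import Mathlib


variable {V : Type*}

/-- Colour Refinement equivalence: `crRel G i u v` means `u` and `v` get the same colour
after `i` iterations of Colour Refinement on `G` (starting monochromatic). -/
def crRel (G : SimpleGraph V) : ℕ → V → V → Prop
  | 0 => fun _ _ => True
  | (i+1) => fun u v => crRel G i u v ∧ ∀ w : V,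
      Nat.card {x : V // G.Adj u x ∧ crRel G i x w} =
      Nat.card {x : V // G.Adj v x ∧ crRel G i x w}

/-- The colour class of `v` after `i` iterations. -/
def crClass (G : SimpleGraph V) (i : ℕ) (v : V) : Set V :=
  {u : V | crRel G i u v}

/-- The partition `π^i` induced by the colouring after `i` iterations. -/
def crPartition (G : SimpleGraph V) (i : ℕ) : Set (Set V) :=
  {C : Set V | ∃ v : V, C = crClass G i v}

/-- `G` is a long-refinement graph: Colour Refinement takes exactly `n - 1` iterations
to stabilise. -/
def IsLongRefinement [Fintype V] (G : SimpleGraph V) : Prop :=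
  (∀ i < Fintype.card V - 1, crPartition G (i+1) ≠ crPartition G i) ∧
  crPartition G (Fintype.card V) = crPartition G (Fintype.card V - 1)

/-- The degree of a vertex. -/
noncomputable def vdeg (G : SimpleGraph V) (v : V) : ℕ :=
  Nat.card {u : V // G.Adj v u}

/-- `degOn G C C' k` : every vertex of `C` has exactly `k` neighbours in `C'`,
i.e. `deg_{C'}(C) = k`. -/
def degOn (G : SimpleGraph V) (C C' : Set V) (k : ℕ) : Prop :=
  ∀ v ∈ C, Nat.card {x : V // x ∈ C' ∧ G.Adj v x} = k

/-- `C` is balanced with respect to `C'`: `deg_{C'}(C)` is defined. -/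
def BalancedWrt (G : SimpleGraph V) (C C' : Set V) : Prop :=
  ∃ k, degOn G C C' k

section Helpers

variable {G : SimpleGraph V}

lemma crRel_refl (i : ℕ) (v : V) : crRel G i v v := by
  induction i with
  | zero => trivial
  | succ i ih => exact ⟨ih, fun w => rfl⟩

lemma crRel_symm {i : ℕ} {u v : V} (h : crRel G i u v) : crRel G i v u := by
  induction i with
  | zero => trivial
  | succ i ih => exact ⟨ih h.1, fun w => (h.2 w).symm⟩

lemma crRel_trans {i : ℕ} {u v w : V} (h1 : crRel G i u v) (h2 : crRel G i v w) :
    crRel G i u w := by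
  induction i with
  | zero => trivial
  | succ i ih => exact ⟨ih h1.1 h2.1, fun z => (h1.2 z).trans (h2.2 z)⟩

lemma crRel_of_succ {i : ℕ} {u v : V} (h : crRel G (i+1) u v) : crRel G i u v := h.1

lemma mem_crClass {i : ℕ} {u v : V} : u ∈ crClass G i v ↔ crRel G i u v := Iff.rfl

lemma self_mem_crClass (i : ℕ) (v : V) : v ∈ crClass G i v := crRel_refl i v

lemma crClass_eq_of_rel {i : ℕ} {u v : V} (h : crRel G i u v) :
    crClass G i u = crClass G i v := by
  ext x
  exact ⟨fun hx => crRel_trans hx h, fun hx => crRel_trans hx (crRel_symm h)⟩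

lemma rel_of_crClass_eq {i : ℕ} {u v : V} (h : crClass G i u = crClass G i v) :
    crRel G i u v := by
  have : u ∈ crClass G i v := h ▸ self_mem_crClass i u
  exact this

lemma crClass_mem_crPartition (i : ℕ) (v : V) : crClass G i v ∈ crPartition G i := ⟨v, rfl⟩

lemma class_eq_crClass {i : ℕ} {X : Set V} (hX : X ∈ crPartition G i) {x : V} (hx : x ∈ X) :
    X = crClass G i x := by
  obtain ⟨v, rfl⟩ := hX
  exact (crClass_eq_of_rel hx).symm

lemma class_nonempty {i : ℕ} {X : Set V} (hX : X ∈ crPartition G i) : X.Nonempty := by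
  obtain ⟨v, rfl⟩ := hX
  exact ⟨v, self_mem_crClass i v⟩

lemma class_eq_of_mem_mem {i : ℕ} {X Y : Set V} (hX : X ∈ crPartition G i)
    (hY : Y ∈ crPartition G i) {z : V} (hzX : z ∈ X) (hzY : z ∈ Y) : X = Y := by
  rw [class_eq_crClass hX hzX, class_eq_crClass hY hzY]

lemma crClass_succ_subset (i : ℕ) (v : V) : crClass G (i+1) v ⊆ crClass G i v :=
  fun _ hx => crRel_of_succ hx

lemma crPartition_finite [Finite V] (i : ℕ) : (crPartition G i).Finite :=
  Set.toFinite _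

end Helpers
section Helpers2

variable {G : SimpleGraph V}

open scoped Classical

/-- counting function: number of neighbours of `v` in `S`. -/
noncomputable def cnt (G : SimpleGraph V) (v : V) (S : Set V) : ℕ :=
  Set.ncard {x : V | G.Adj v x ∧ x ∈ S}

lemma natCard_eq_cnt (i : ℕ) (u w : V) :
    Nat.card {x : V // G.Adj u x ∧ crRel G i x w} = cnt G u (crClass G i w) := by
  have : {x : V | G.Adj u x ∧ crRel G i x w} = {x : V | G.Adj u x ∧ x ∈ crClass G i w} := rfl
  rw [cnt, ← this, ← Nat.card_coe_set_eq]
  rfl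

lemma cnt_eq_of_rel {i : ℕ} {u v : V} (h : crRel G (i+1) u v) (w : V) :
    cnt G u (crClass G i w) = cnt G v (crClass G i w) := by
  rw [← natCard_eq_cnt, ← natCard_eq_cnt]; exact h.2 w

lemma exists_cnt_ne {i : ℕ} {u v : V} (h : crRel G i u v) (h' : ¬ crRel G (i+1) u v) :
    ∃ w, cnt G u (crClass G i w) ≠ cnt G v (crClass G i w) := by
  by_contra hc
  push_neg at hc
  exact h' ⟨h, fun w => by rw [natCard_eq_cnt, natCard_eq_cnt]; exact hc w⟩

lemma cnt_union [Finite V] {S T : Set V} (hd : Disjoint S T) (v : V) :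
    cnt G v (S ∪ T) = cnt G v S + cnt G v T := by
  have hset : {x : V | G.Adj v x ∧ x ∈ S ∪ T} =
      {x : V | G.Adj v x ∧ x ∈ S} ∪ {x : V | G.Adj v x ∧ x ∈ T} := by
    ext x; simp [Set.mem_union]; tauto
  have hd' : Disjoint {x : V | G.Adj v x ∧ x ∈ S} {x : V | G.Adj v x ∧ x ∈ T} :=
    Set.disjoint_left.mpr fun x (hx : _ ∧ _) (hx' : _ ∧ _) =>
      (Set.disjoint_left.mp hd hx.2) hx'.2
  rw [cnt, hset, Set.ncard_union_eq hd' (Set.toFinite _) (Set.toFinite _)]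
  rfl

lemma cnt_singleton (v u : V) : cnt G v {u} = if G.Adj v u then 1 else 0 := by
  rcases Classical.em (G.Adj v u) with h | h
  · rw [if_pos h]
    have : {x : V | G.Adj v x ∧ x ∈ ({u} : Set V)} = {u} := by
      ext x; simp only [Set.mem_setOf_eq, Set.mem_singleton_iff]
      exact ⟨fun hx => hx.2, fun hx => ⟨hx ▸ h, hx⟩⟩
    rw [cnt, this, Set.ncard_singleton]
  · rw [if_neg h]
    have : {x : V | G.Adj v x ∧ x ∈ ({u} : Set V)} = ∅ := by
      ext x; simp only [Set.mem_setOf_eq, Set.mem_singleton_iff, Set.mem_empty_iff_false,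
        iff_false, not_and]
      intro hx hxu; exact h (hxu ▸ hx)
    rw [cnt, this, Set.ncard_empty]

lemma cnt_pair [Finite V] {a b : V} (hab : a ≠ b) (v : V) :
    cnt G v {a, b} = (if G.Adj v a then 1 else 0) + (if G.Adj v b then 1 else 0) := by
  have : ({a, b} : Set V) = {a} ∪ {b} := rfl
  rw [this, cnt_union (by simpa using hab), cnt_singleton, cnt_singleton]

lemma cnt_pair_self_left [Finite V] {a b : V} (hab : a ≠ b) :
    cnt G a {a, b} = cnt G b {a, b} := by
  rw [cnt_pair hab, cnt_pair hab, if_neg (G.irrefl), if_neg (G.irrefl)]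
  simp only [Nat.zero_add, Nat.add_zero]
  congr 1
  simp [G.adj_comm]

end Helpers2
section Helpers3

variable {G : SimpleGraph V}

lemma crPartition_eq_of_rel_iff {i j : ℕ}
    (h : ∀ u v, crRel G i u v ↔ crRel G j u v) :
    crPartition G i = crPartition G j := by
  have hcl : ∀ v, crClass G i v = crClass G j v := fun v => by
    ext u; exact h u v
  ext C
  constructor
  · rintro ⟨v, rfl⟩; exact ⟨v, hcl v⟩
  · rintro ⟨v, rfl⟩; exact ⟨v, (hcl v).symm⟩

lemma rel_succ_iff_of_partition_eq {i : ℕ}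
    (h : crPartition G (i+1) = crPartition G i) :
    ∀ u v, crRel G (i+1) u v ↔ crRel G i u v := by
  intro u v
  refine ⟨crRel_of_succ, fun hr => ?_⟩
  have hmem : crClass G (i+1) u ∈ crPartition G i := h ▸ crClass_mem_crPartition (i+1) u
  have heq : crClass G (i+1) u = crClass G i u :=
    class_eq_crClass hmem (self_mem_crClass (i+1) u)
  have hv : v ∈ crClass G (i+1) u := heq ▸ (crRel_symm hr : v ∈ crClass G i u)
  exact crRel_symm hv

lemma rel_succ_congr {i j : ℕ} (h : ∀ u v, crRel G i u v ↔ crRel G j u v) :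
    ∀ u v, crRel G (i+1) u v ↔ crRel G (j+1) u v := by
  intro u v
  have hcard : ∀ (z w : V), Nat.card {x : V // G.Adj z x ∧ crRel G i x w} =
      Nat.card {x : V // G.Adj z x ∧ crRel G j x w} := by
    intro z w
    exact Nat.card_congr (Equiv.subtypeEquivRight fun x => by
      constructor
      · rintro ⟨h1, h2⟩; exact ⟨h1, (h x w).mp h2⟩
      · rintro ⟨h1, h2⟩; exact ⟨h1, (h x w).mpr h2⟩)
  constructor
  · rintro ⟨h1, h2⟩
    exact ⟨(h u v).mp h1, fun w => (hcard u w).symm.trans ((h2 w).trans (hcard v w))⟩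
  · rintro ⟨h1, h2⟩
    exact ⟨(h u v).mpr h1, fun w => (hcard u w).trans ((h2 w).trans (hcard v w).symm)⟩

lemma crPartition_stable {i : ℕ} (h : crPartition G (i+1) = crPartition G i) :
    ∀ k, crPartition G (i+k) = crPartition G i := by
  have key : ∀ k, ∀ u v, crRel G (i+k) u v ↔ crRel G i u v := by
    intro k
    induction k with
    | zero => exact fun u v => Iff.rfl
    | succ k ih =>
      have step : ∀ u v, crRel G (i+k+1) u v ↔ crRel G (i+1) u v := rel_succ_congr ih
      exact fun u v => (step u v).trans (rel_succ_iff_of_partition_eq h u v)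
  exact fun k => crPartition_eq_of_rel_iff (key k)

lemma crPartition_stable_of_le {i j : ℕ} (h : crPartition G (i+1) = crPartition G i)
    (hij : i ≤ j) : crPartition G j = crPartition G i := by
  obtain ⟨k, rfl⟩ := Nat.exists_eq_add_of_le hij
  exact crPartition_stable h k

end Helpers3
set_option linter.unusedSectionVars false
section Helpers4

variable [Finite V] {G : SimpleGraph V}

open scoped Classical

/-- chosen sub-class of a class, one level deeper -/
noncomputable def half (G : SimpleGraph V) (i : ℕ) (X : Set V) : Set V :=
  if h : X.Nonempty then crClass G (i+1) h.some else ∅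

lemma half_subset {i : ℕ} {X : Set V} (hX : X ∈ crPartition G i) : half G i X ⊆ X := by
  have hne : X.Nonempty := class_nonempty hX
  rw [half, dif_pos hne]
  intro x hx
  have : x ∈ crClass G i hne.some := crRel_of_succ hx
  rwa [← class_eq_crClass hX hne.some_mem] at this

lemma half_mem {i : ℕ} {X : Set V} (hX : X ∈ crPartition G i) :
    half G i X ∈ crPartition G (i+1) := by
  have hne : X.Nonempty := class_nonempty hX
  rw [half, dif_pos hne]
  exact crClass_mem_crPartition _ _

lemma half_nonempty {i : ℕ} {X : Set V} (hX : X ∈ crPartition G i) :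
    (half G i X).Nonempty := class_nonempty (half_mem hX)

lemma half_injOn (i : ℕ) : Set.InjOn (half G i) (crPartition G i) := by
  intro X hX Y hY hXY
  obtain ⟨z, hz⟩ := half_nonempty hX
  have hz' : z ∈ half G i Y := hXY ▸ hz
  exact class_eq_of_mem_mem hX hY (half_subset hX hz) (half_subset hY hz')

lemma subclass_in_image {i : ℕ} {Y Z : Set V} (hY : Y ∈ crPartition G i)
    (hsub : Z ⊆ Y) (hZne : Z.Nonempty) (him : Z ∈ half G i '' crPartition G i) :
    Z = half G i Y := by
  obtain ⟨X, hX, rfl⟩ := him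
  obtain ⟨z, hz⟩ := hZne
  have : z ∈ X := half_subset hX hz
  rw [class_eq_of_mem_mem hX hY this (hsub hz)]

lemma ncard_crPartition_le_succ (i : ℕ) :
    (crPartition G i).ncard ≤ (crPartition G (i+1)).ncard := by
  rw [← Set.ncard_image_of_injOn (half_injOn (G := G) i)]
  exact Set.ncard_le_ncard (Set.image_subset_iff.mpr fun X hX => half_mem hX)
    (Set.toFinite _)

lemma exists_class_ne {i : ℕ} (hne : crPartition G (i+1) ≠ crPartition G i) :
    ∃ v, crClass G (i+1) v ≠ crClass G i v := by
  by_contra hc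
  push_neg at hc
  refine hne (crPartition_eq_of_rel_iff fun u v => ?_)
  have : u ∈ crClass G (i+1) v ↔ u ∈ crClass G i v := by rw [hc v]
  exact this

/-- basic split data: a class `Y` of `π^i` that is not in `π^{i+1}`, and two distinct
new subclasses of it in `π^{i+1}`. -/
lemma exists_split {i : ℕ} (hne : crPartition G (i+1) ≠ crPartition G i) :
    ∃ Y X₁ X₂ : Set V, Y ∈ crPartition G i ∧ Y ∉ crPartition G (i+1) ∧
      X₁ ∈ crPartition G (i+1) ∧ X₂ ∈ crPartition G (i+1) ∧
      X₁ ∉ crPartition G i ∧ X₂ ∉ crPartition G i ∧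
      X₁ ≠ X₂ ∧ X₁ ⊆ Y ∧ X₂ ⊆ Y := by
  obtain ⟨v, hv⟩ := exists_class_ne hne
  set Y := crClass G i v with hYdef
  set X₁ := crClass G (i+1) v with hX1def
  have hX1sub : X₁ ⊆ Y := crClass_succ_subset i v
  have hX1ne : X₁ ≠ Y := hv
  -- Y is not a class of π^{i+1}
  have hYnot : Y ∉ crPartition G (i+1) := by
    intro hmem
    have : Y = crClass G (i+1) v := class_eq_crClass hmem (self_mem_crClass i v)
    exact hX1ne this.symm
  -- pick an element of Y outside X₁
  have hss : X₁ ⊂ Y := ⟨hX1sub, fun h => hX1ne (Set.Subset.antisymm hX1sub h)⟩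
  obtain ⟨v', hv'Y, hv'X1⟩ := Set.exists_of_ssubset hss
  set X₂ := crClass G (i+1) v' with hX2def
  have hYv' : Y = crClass G i v' := class_eq_crClass (crClass_mem_crPartition i v) hv'Y
  have hX2sub : X₂ ⊆ Y := by rw [hYv']; exact crClass_succ_subset i v'
  have hX12 : X₁ ≠ X₂ := by
    intro h
    exact hv'X1 (h ▸ self_mem_crClass (i+1) v')
  have hX1not : X₁ ∉ crPartition G i := by
    intro hmem
    have : X₁ = crClass G i v := class_eq_crClass hmem (self_mem_crClass (i+1) v)
    exact hX1ne this
  have hX2not : X₂ ∉ crPartition G i := by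
    intro hmem
    have h2 : X₂ = crClass G i v' := class_eq_crClass hmem (self_mem_crClass (i+1) v')
    have : v ∈ X₂ := by rw [h2, ← hYv']; exact self_mem_crClass i v
    exact hX12 (class_eq_of_mem_mem (crClass_mem_crPartition (i+1) v)
      (crClass_mem_crPartition (i+1) v') (self_mem_crClass (i+1) v) this)
  exact ⟨Y, X₁, X₂, crClass_mem_crPartition i v, hYnot, crClass_mem_crPartition _ _,
    crClass_mem_crPartition _ _, hX1not, hX2not, hX12, hX1sub, hX2sub⟩

end Helpers4
set_option linter.unusedSectionVars false
section Helpers5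

variable [Finite V] {G : SimpleGraph V}

lemma two_missed {i : ℕ} {Z₁ Z₂ : Set V} (h1 : Z₁ ∈ crPartition G (i+1))
    (h2 : Z₂ ∈ crPartition G (i+1)) (h12 : Z₁ ≠ Z₂)
    (hm1 : Z₁ ∉ half G i '' crPartition G i) (hm2 : Z₂ ∉ half G i '' crPartition G i) :
    (crPartition G i).ncard + 2 ≤ (crPartition G (i+1)).ncard := by
  have himg : half G i '' crPartition G i ⊆ crPartition G (i+1) :=
    Set.image_subset_iff.mpr fun X hX => half_mem hX
  have hsub : insert Z₁ (insert Z₂ (half G i '' crPartition G i)) ⊆ crPartition G (i+1) := by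
    intro X hX
    rcases hX with rfl | hX
    · exact h1
    rcases hX with rfl | hX
    · exact h2
    · exact himg hX
  have hcard : (insert Z₁ (insert Z₂ (half G i '' crPartition G i))).ncard =
      (crPartition G i).ncard + 2 := by
    rw [Set.ncard_insert_of_notMem (by
        intro h
        rcases h with rfl | h
        · exact h12 rfl
        · exact hm1 h) (Set.toFinite _),
      Set.ncard_insert_of_notMem hm2 (Set.toFinite _),
      Set.ncard_image_of_injOn (half_injOn i)]
  calc (crPartition G i).ncard + 2
      = (insert Z₁ (insert Z₂ (half G i '' crPartition G i))).ncard := hcard.symm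
    _ ≤ (crPartition G (i+1)).ncard := Set.ncard_le_ncard hsub (Set.toFinite _)

lemma one_missed_of_two_subclasses {i : ℕ} {Y Z₁ Z₂ : Set V} (hY : Y ∈ crPartition G i)
    (h1 : Z₁ ∈ crPartition G (i+1)) (h2 : Z₂ ∈ crPartition G (i+1)) (h12 : Z₁ ≠ Z₂)
    (hs1 : Z₁ ⊆ Y) (hs2 : Z₂ ⊆ Y) :
    ∃ Z ∈ crPartition G (i+1), Z ⊆ Y ∧ Z ∉ half G i '' crPartition G i := by
  by_cases hm1 : Z₁ ∈ half G i '' crPartition G i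
  · refine ⟨Z₂, h2, hs2, fun hm2 => h12 ?_⟩
    rw [subclass_in_image hY hs1 (class_nonempty h1) hm1,
      subclass_in_image hY hs2 (class_nonempty h2) hm2]
  · exact ⟨Z₁, h1, hs1, hm1⟩

lemma ncard_lt_of_ne {i : ℕ} (hne : crPartition G (i+1) ≠ crPartition G i) :
    (crPartition G i).ncard < (crPartition G (i+1)).ncard := by
  obtain ⟨Y, X₁, X₂, hY, hYnot, hX1, hX2, -, -, h12, hs1, hs2⟩ := exists_split hne
  obtain ⟨Z, hZ, -, hZm⟩ := one_missed_of_two_subclasses hY hX1 hX2 h12 hs1 hs2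
  have hss : half G i '' crPartition G i ⊂ crPartition G (i+1) := by
    refine ⟨Set.image_subset_iff.mpr fun X hX => half_mem hX, fun h => hZm (h hZ)⟩
  calc (crPartition G i).ncard = (half G i '' crPartition G i).ncard :=
        (Set.ncard_image_of_injOn (half_injOn i)).symm
    _ < (crPartition G (i+1)).ncard := Set.ncard_lt_ncard hss (Set.toFinite _)

/-- Main structure lemma: if `π^{i+1} ≠ π^i` but the number of classes grows by at most
one, then exactly one class `Y` splits, into exactly two parts. -/
lemma split_structure {i : ℕ} (hne : crPartition G (i+1) ≠ crPartition G i)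
    (hcard : (crPartition G (i+1)).ncard ≤ (crPartition G i).ncard + 1) :
    ∃ Y X₁ X₂ : Set V, Y ∈ crPartition G i ∧ Y ∉ crPartition G (i+1) ∧
      X₁ ∈ crPartition G (i+1) ∧ X₂ ∈ crPartition G (i+1) ∧
      X₁ ∉ crPartition G i ∧ X₂ ∉ crPartition G i ∧
      X₁ ≠ X₂ ∧ X₁ ∪ X₂ = Y ∧
      (∀ Z ∈ crPartition G i, Z ≠ Y → Z ∈ crPartition G (i+1)) ∧
      (∀ X ∈ crPartition G (i+1), X ∉ crPartition G i → X = X₁ ∨ X = X₂) := by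
  obtain ⟨Y, X₁, X₂, hY, hYnot, hX1, hX2, hX1not, hX2not, h12, hs1, hs2⟩ := exists_split hne
  -- persistence of all other classes
  have hpersist : ∀ Z ∈ crPartition G i, Z ≠ Y → Z ∈ crPartition G (i+1) := by
    intro Z hZ hZY
    by_contra hZnot
    obtain ⟨z, hz⟩ := class_nonempty hZ
    have hZeq : Z = crClass G i z := class_eq_crClass hZ hz
    have hW1sub : crClass G (i+1) z ⊆ Z := hZeq ▸ crClass_succ_subset i z
    have hW1ne : crClass G (i+1) z ≠ Z := by
      intro h
      exact hZnot (h ▸ crClass_mem_crPartition (i+1) z)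
    obtain ⟨z', hz'Z, hz'W⟩ := Set.exists_of_ssubset
      ⟨hW1sub, fun h => hW1ne (Set.Subset.antisymm hW1sub h)⟩
    have hZz' : Z = crClass G i z' := class_eq_crClass hZ hz'Z
    have hW2sub : crClass G (i+1) z' ⊆ Z := hZz' ▸ crClass_succ_subset i z'
    have hW12 : crClass G (i+1) z ≠ crClass G (i+1) z' := by
      intro h
      exact hz'W (h ▸ self_mem_crClass (i+1) z')
    obtain ⟨M₁, hM1, hM1sub, hM1miss⟩ := one_missed_of_two_subclasses hY hX1 hX2 h12 hs1 hs2
    obtain ⟨M₂, hM2, hM2sub, hM2miss⟩ := one_missed_of_two_subclasses hZ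
      (crClass_mem_crPartition (i+1) z) (crClass_mem_crPartition (i+1) z') hW12 hW1sub hW2sub
    have hM12 : M₁ ≠ M₂ := by
      intro h
      obtain ⟨m, hm⟩ := class_nonempty hM1
      exact hZY (class_eq_of_mem_mem hZ hY (hM2sub (h ▸ hm)) (hM1sub hm))
    have := two_missed hM1 hM2 hM12 hM1miss hM2miss
    omega
  -- the only new classes are X₁ and X₂
  have hnew : ∀ X ∈ crPartition G (i+1), X ∉ crPartition G i → X = X₁ ∨ X = X₂ := by
    intro X hX hXnot
    by_contra hc
    push_neg at hc
    obtain ⟨x, hx⟩ := class_nonempty hX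
    have hXeq : X = crClass G (i+1) x := class_eq_crClass hX hx
    have hZnot : crClass G i x ∉ crPartition G (i+1) := by
      intro h
      have : crClass G i x = X := class_eq_of_mem_mem h hX (self_mem_crClass i x)
        (hXeq ▸ self_mem_crClass (i+1) x)
      exact hXnot (this ▸ crClass_mem_crPartition i x)
    have hZY : crClass G i x = Y := by
      by_contra h
      exact hZnot (hpersist _ (crClass_mem_crPartition i x) h)
    have hXsub : X ⊆ Y := hZY ▸ (hXeq ▸ crClass_succ_subset i x)
    -- three distinct subclasses of Y, at most one in the image: contradiction
    have key : ∀ W₁ W₂ : Set V, W₁ ∈ crPartition G (i+1) → W₂ ∈ crPartition G (i+1) →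
        W₁ ≠ W₂ → W₁ ⊆ Y → W₂ ⊆ Y → W₁ ∈ half G i '' crPartition G i →
        W₂ ∈ half G i '' crPartition G i → False := by
      intro W₁ W₂ hW1 hW2 hW12 hWs1 hWs2 hWm1 hWm2
      exact hW12 ((subclass_in_image hY hWs1 (class_nonempty hW1) hWm1).trans
        (subclass_in_image hY hWs2 (class_nonempty hW2) hWm2).symm)
    by_cases hm1 : X₁ ∈ half G i '' crPartition G i
    · have hmX : X ∉ half G i '' crPartition G i :=
        fun hm => key X₁ X hX1 hX hc.1.symm hs1 hXsub hm1 hm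
      have hm2 : X₂ ∉ half G i '' crPartition G i :=
        fun hm => key X₁ X₂ hX1 hX2 h12 hs1 hs2 hm1 hm
      have := two_missed hX2 hX (fun h => hc.2 h.symm) hm2 hmX
      omega
    · by_cases hm2 : X₂ ∈ half G i '' crPartition G i
      · have hmX : X ∉ half G i '' crPartition G i :=
          fun hm => key X₂ X hX2 hX hc.2.symm hs2 hXsub hm2 hm
        have := two_missed hX1 hX (fun h => hc.1 h.symm) hm1 hmX
        omega
      · have := two_missed hX1 hX2 h12 hm1 hm2
        omega
  -- the union of the two new classes is Y
  have hunion : X₁ ∪ X₂ = Y := by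
    apply Set.Subset.antisymm (Set.union_subset hs1 hs2)
    intro y hy
    have hYy : Y = crClass G i y := class_eq_crClass hY hy
    have hWsub : crClass G (i+1) y ⊆ Y := hYy ▸ crClass_succ_subset i y
    have hWnot : crClass G (i+1) y ∉ crPartition G i := by
      intro h
      have : crClass G (i+1) y = Y := class_eq_of_mem_mem h hY
        (self_mem_crClass (i+1) y) hy
      exact hYnot (this ▸ crClass_mem_crPartition (i+1) y)
    rcases hnew _ (crClass_mem_crPartition (i+1) y) hWnot with h | h
    · exact Set.mem_union_left _ (h ▸ self_mem_crClass (i+1) y)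
    · exact Set.mem_union_right _ (h ▸ self_mem_crClass (i+1) y)
  exact ⟨Y, X₁, X₂, hY, hYnot, hX1, hX2, hX1not, hX2not, h12, hunion, hpersist, hnew⟩

end Helpers5
set_option linter.unusedSectionVars false
section Helpers6

variable [Fintype V] {G : SimpleGraph V}

open scoped Classical

lemma crPartition_zero (hV : Nonempty V) : crPartition G 0 = {Set.univ} := by
  obtain ⟨v⟩ := hV
  have huniv : ∀ w : V, crClass G 0 w = Set.univ := by
    intro w; ext u; simp [crClass, crRel]
  ext C
  simp only [crPartition, Set.mem_setOf_eq, Set.mem_singleton_iff]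
  exact ⟨fun ⟨w, hw⟩ => hw.trans (huniv w), fun h => ⟨v, h.trans (huniv v).symm⟩⟩

lemma ncard_crPartition_le (hV : Nonempty V) (i : ℕ) :
    (crPartition G i).ncard ≤ Fintype.card V := by
  have hinj : Set.InjOn (fun X : Set V => if h : X.Nonempty then h.some else Classical.arbitrary V)
      (crPartition G i) := by
    intro X hX Y hY hXY
    dsimp only at hXY
    rw [dif_pos (class_nonempty hX), dif_pos (class_nonempty hY)] at hXY
    exact class_eq_of_mem_mem hX hY ((class_nonempty hX).some_mem)
      (hXY.symm ▸ (class_nonempty hY).some_mem)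
  have := Set.ncard_le_ncard_of_injOn (s := crPartition G i) (t := (Set.univ : Set V))
    _ (fun X _ => Set.mem_univ _) hinj Set.finite_univ
  rwa [Set.ncard_univ, Nat.card_eq_fintype_card] at this

lemma longRef_ncard (h : IsLongRefinement G) (hV : Nonempty V) :
    ∀ i ≤ Fintype.card V - 1, (crPartition G i).ncard = i + 1 := by
  set n := Fintype.card V with hn
  have hn1 : 1 ≤ n := Fintype.card_pos
  have hlow : ∀ i ≤ n - 1, i + 1 ≤ (crPartition G i).ncard := by
    intro i
    induction i with
    | zero => intro _; rw [crPartition_zero hV, Set.ncard_singleton]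
    | succ i ih =>
      intro hi
      have hi' : i ≤ n - 1 := by omega
      have hlt : i < n - 1 := by omega
      have := ncard_lt_of_ne (h.1 i hlt)
      have := ih hi'
      omega
  have hgap : ∀ k ≤ n - 1, (crPartition G (n-1-k)).ncard + k ≤ (crPartition G (n-1)).ncard := by
    intro k
    induction k with
    | zero => intro _; simp
    | succ k ih =>
      intro hk
      have h1 : n - 1 - (k+1) < n - 1 := by omega
      have h2 : n - 1 - (k+1) + 1 = n - 1 - k := by omega
      have hlt := ncard_lt_of_ne (h.1 (n-1-(k+1)) h1)
      rw [h2] at hlt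
      have := ih (by omega)
      omega
  intro i hi
  have h1 := hlow i hi
  have h2 := hgap (n-1-i) (by omega)
  have h3 : n - 1 - (n - 1 - i) = i := by omega
  rw [h3] at h2
  have h4 := ncard_crPartition_le (G := G) hV (n-1)
  omega

lemma longRef_stable (h : IsLongRefinement G) (hV : Nonempty V) {j : ℕ}
    (hj : Fintype.card V - 1 ≤ j) :
    crPartition G j = crPartition G (Fintype.card V - 1) := by
  have h0 : 1 ≤ Fintype.card V := Fintype.card_pos
  have hstep : crPartition G ((Fintype.card V - 1) + 1) = crPartition G (Fintype.card V - 1) := by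
    have heq : Fintype.card V - 1 + 1 = Fintype.card V := by omega
    rw [heq]; exact h.2
  exact crPartition_stable_of_le hstep hj

end Helpers6
set_option linter.unusedSectionVars false
section Helpers7

variable [Finite V] {G : SimpleGraph V}

lemma class_disjoint {i : ℕ} {X Y : Set V} (hX : X ∈ crPartition G i)
    (hY : Y ∈ crPartition G i) (hne : X ≠ Y) : Disjoint X Y :=
  Set.disjoint_left.mpr fun _ hzX hzY => hne (class_eq_of_mem_mem hX hY hzX hzY)

lemma rel_of_mem_class {i : ℕ} {X : Set V} (hX : X ∈ crPartition G i) {x y : V}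
    (hx : x ∈ X) (hy : y ∈ X) : crRel G i x y := by
  rw [class_eq_crClass hX hy] at hx
  exact hx

lemma not_rel_of_mem_classes {i : ℕ} {X Y : Set V} (hX : X ∈ crPartition G i)
    (hY : Y ∈ crPartition G i) (hne : X ≠ Y) {x y : V} (hx : x ∈ X) (hy : y ∈ Y) :
    ¬ crRel G i x y := by
  intro hr
  have : x ∈ Y := by rw [class_eq_crClass hY hy]; exact hr
  exact hne (class_eq_of_mem_mem hX hY hx this)

lemma cnt_eq_on_class {i : ℕ} {u v : V} (hrel : crRel G (i+1) u v) {W : Set V}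
    (hW : W ∈ crPartition G i) : cnt G u W = cnt G v W := by
  obtain ⟨w, rfl⟩ := hW
  exact cnt_eq_of_rel hrel w

/-- a 2-element set partitioned into two nonempty disjoint parts: both are singletons. -/
lemma pair_subclasses {P Q₁ Q₂ : Set V} (hP : P.ncard = 2) (hu : Q₁ ∪ Q₂ = P)
    (hne1 : Q₁.Nonempty) (hne2 : Q₂.Nonempty) (hd : Disjoint Q₁ Q₂) :
    ∃ u₁ u₂ : V, u₁ ≠ u₂ ∧ P = {u₁, u₂} ∧ Q₁ = {u₁} ∧ Q₂ = {u₂} := by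
  obtain ⟨a, b, hab, hPab⟩ := Set.ncard_eq_two.mp hP
  obtain ⟨q₁, hq₁⟩ := hne1
  obtain ⟨q₂, hq₂⟩ := hne2
  have hq12 : q₁ ≠ q₂ := fun h => (Set.disjoint_left.mp hd hq₁) (h ▸ hq₂)
  have hq₁P : q₁ ∈ P := hu ▸ Set.mem_union_left _ hq₁
  have hq₂P : q₂ ∈ P := hu ▸ Set.mem_union_right _ hq₂
  have hmem : ∀ x ∈ P, x = q₁ ∨ x = q₂ := by
    intro x hx
    rw [hPab] at hx hq₁P hq₂P
    rcases hx with rfl | rfl <;> rcases hq₁P with h1 | h1 <;> rcases hq₂P with h2 | h2 <;>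
      simp_all
  have hQ1 : Q₁ = {q₁} := by
    apply Set.Subset.antisymm
    · intro x hx
      rcases hmem x (hu ▸ Set.mem_union_left _ hx) with rfl | rfl
      · rfl
      · exact absurd hq₂ (Set.disjoint_left.mp hd hx)
    · intro x hx; rwa [Set.mem_singleton_iff.mp hx]
  have hQ2 : Q₂ = {q₂} := by
    apply Set.Subset.antisymm
    · intro x hx
      rcases hmem x (hu ▸ Set.mem_union_right _ hx) with rfl | rfl
      · exact absurd hx (Set.disjoint_left.mp hd hq₁)
      · rfl
    · intro x hx; rwa [Set.mem_singleton_iff.mp hx]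
  refine ⟨q₁, q₂, hq12, ?_, hQ1, hQ2⟩
  rw [← hu, hQ1, hQ2]
  rfl

lemma cnt_pair_of_singleton_ne {v₁ v₂ u : V} (h12 : v₁ ≠ v₂)
    (hne : cnt G v₁ {u} ≠ cnt G v₂ {u}) : cnt G u {v₁, v₂} = 1 := by
  classical
  rw [cnt_singleton, cnt_singleton] at hne
  rw [cnt_pair h12]
  by_cases h1 : G.Adj v₁ u <;> by_cases h2 : G.Adj v₂ u <;>
    simp only [h1, h2, if_pos, if_neg, if_true, if_false] at hne <;>
    first
      | exact absurd rfl hne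
      | · rw [G.adj_comm u v₁, G.adj_comm u v₂]
          simp [h1, h2]

lemma cnt_singleton_le_one (v u : V) : cnt G v {u} ≤ 1 := by
  classical
  rw [cnt_singleton]
  split <;> omega

end Helpers7
set_option maxHeartbeats 1000000

/-- The second pair `P₂` in the splitting order is distinct from both pairs
`A = P_a`, `B = P_b` arising from the split of `C_{p-1}`; consequently `π^p`
contains at least `4` pairs. -/

theorem second_pair_distinct [Fintype V] (G : SimpleGraph V)
    (h : IsLongRefinement G) (p : ℕ) (hp1 : 1 ≤ p)
    (hp : ∀ C ∈ crPartition G p, C.ncard ≤ 2)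
    (hpmin : ∀ q < p, ∃ C ∈ crPartition G q, 2 < C.ncard)
    (C A B : Set V)
    (hC : C ∈ crPartition G (p-1)) (hC' : C ∉ crPartition G p)
    (hA : A ∈ crPartition G p) (hA' : A ∉ crPartition G (p-1))
    (hB : B ∈ crPartition G p) (hB' : B ∉ crPartition G (p-1))
    (hAB : A ≠ B) (hCAB : C = A ∪ B)
    (P2 : Set V) (hP2 : P2 ∈ crPartition G (p+1)) (hP2' : P2 ∉ crPartition G (p+2)) :
    P2 ≠ A ∧ P2 ≠ B ∧ 4 ≤ {D | D ∈ crPartition G p ∧ D.ncard = 2}.ncard := by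
  classical
  obtain ⟨k, rfl⟩ : ∃ k, p = k + 1 := ⟨p - 1, by omega⟩
  simp only [Nat.add_sub_cancel] at hC hA' hB'
  have e1 : k + 1 + 1 = k + 2 := rfl
  have e2 : k + 1 + 2 = k + 3 := rfl
  rw [e1] at hP2
  rw [e2] at hP2'
  have hV : Nonempty V := by
    obtain ⟨D, hD, -⟩ := hpmin 0 (by omega)
    obtain ⟨v, -⟩ := class_nonempty hD
    exact ⟨v⟩
  have hn1 : 1 ≤ Fintype.card V := Fintype.card_pos
  have hNcard := longRef_ncard h hV
  -- all three relevant refinement steps happen strictly before stabilisation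
  have hk3 : k + 3 ≤ Fintype.card V - 1 := by
    by_contra hc
    push_neg at hc
    have h1 : crPartition G (k+3) = crPartition G (Fintype.card V - 1) :=
      longRef_stable h hV (by omega)
    have h2 : crPartition G (k+2) = crPartition G (Fintype.card V - 1) :=
      longRef_stable h hV (by omega)
    rw [h1, ← h2] at hP2'
    exact hP2' hP2
  have hneq1 : crPartition G (k+1) ≠ crPartition G k := h.1 k (by omega)
  have hneq2 : crPartition G (k+2) ≠ crPartition G (k+1) := h.1 (k+1) (by omega)
  have hneq3 : crPartition G (k+3) ≠ crPartition G (k+2) := h.1 (k+2) (by omega)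
  have hc1 : (crPartition G (k+1)).ncard ≤ (crPartition G k).ncard + 1 := by
    rw [hNcard k (by omega), hNcard (k+1) (by omega)]
  have hc2 : (crPartition G (k+2)).ncard ≤ (crPartition G (k+1)).ncard + 1 := by
    rw [hNcard (k+1) (by omega), hNcard (k+2) (by omega)]
  have hc3 : (crPartition G (k+3)).ncard ≤ (crPartition G (k+2)).ncard + 1 := by
    rw [hNcard (k+2) (by omega), hNcard (k+3) (by omega)]
  -- the split C → {A, B} at step k → k+1
  obtain ⟨Y, X₁, X₂, hY, hYnot, hX1, hX2, hX1not, hX2not, hX12, hX12u, hpers1, hnew1⟩ :=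
    split_structure hneq1 hc1
  have hYC : Y = C := by
    by_contra hne
    exact hC' (hpers1 C hC (fun hcc => hne hcc.symm))
  subst hYC
  have hAX : A = X₁ ∨ A = X₂ := hnew1 A hA hA'
  have hBX : B = X₁ ∨ B = X₂ := hnew1 B hB hB'
  have hnew1' : ∀ X ∈ crPartition G (k+1), X ∉ crPartition G k → X = A ∨ X = B := by
    intro X hXm hXn
    rcases hAX with h1 | h1 <;> rcases hBX with h2 | h2
    · exact absurd (h1.trans h2.symm) hAB
    · rcases hnew1 X hXm hXn with rfl | rfl
      · exact Or.inl h1.symm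
      · exact Or.inr h2.symm
    · rcases hnew1 X hXm hXn with rfl | rfl
      · exact Or.inr h2.symm
      · exact Or.inl h1.symm
    · exact absurd (h1.trans h2.symm) hAB
  -- the split P1 → {R₁, R₂} at step k+1 → k+2
  obtain ⟨P1, R₁, R₂, hP1, hP1not, hR1, hR2, hR1not, hR2not, hR12, hR12u, hpers2, hnew2⟩ :=
    split_structure hneq2 hc2
  have hP1card : P1.ncard = 2 := by
    have hle := hp P1 hP1
    obtain ⟨r₁, hr₁⟩ := class_nonempty hR1
    obtain ⟨r₂, hr₂⟩ := class_nonempty hR2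
    have hrne : r₁ ≠ r₂ := fun hh => hR12 (class_eq_of_mem_mem hR1 hR2 hr₁ (hh ▸ hr₂))
    have hsub : ({r₁, r₂} : Set V) ⊆ P1 := by
      rw [← hR12u]
      rintro x (rfl | rfl)
      · exact Set.mem_union_left _ hr₁
      · exact Set.mem_union_right _ hr₂
    have := Set.ncard_le_ncard hsub (Set.toFinite _)
    rw [Set.ncard_pair hrne] at this
    omega
  obtain ⟨u₁, u₂, hu12, hP1pair, hR1s, hR2s⟩ := pair_subclasses hP1card hR12u
    (class_nonempty hR1) (class_nonempty hR2) (class_disjoint hR1 hR2 hR12)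
  -- the split P2 → {S₁, S₂} at step k+2 → k+3
  obtain ⟨P2'', S₁, S₂, hP2m, hP2not, hS1, hS2, hS1not, hS2not, hS12, hS12u, hpers3, hnew3⟩ :=
    split_structure hneq3 hc3
  have hP2eq : P2 = P2'' := by
    by_contra hne
    exact hP2' (hpers3 P2 hP2 hne)
  subst hP2eq
  have hP2card : P2.ncard = 2 := by
    obtain ⟨s₁, hs₁⟩ := class_nonempty hS1
    obtain ⟨s₂, hs₂⟩ := class_nonempty hS2
    have hsne : s₁ ≠ s₂ := fun hh => hS12 (class_eq_of_mem_mem hS1 hS2 hs₁ (hh ▸ hs₂))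
    have hsub : ({s₁, s₂} : Set V) ⊆ P2 := by
      rw [← hS12u]
      rintro x (rfl | rfl)
      · exact Set.mem_union_left _ hs₁
      · exact Set.mem_union_right _ hs₂
    have hge := Set.ncard_le_ncard hsub (Set.toFinite _)
    rw [Set.ncard_pair hsne] at hge
    have hP2mem1 : P2 ∈ crPartition G (k+1) := by
      by_contra hnm
      rcases hnew2 P2 hP2m hnm with rfl | rfl
      · rw [hR1s, Set.ncard_singleton] at hge; omega
      · rw [hR2s, Set.ncard_singleton] at hge; omega
    have := hp P2 hP2mem1
    omega
  have hP2mem1 : P2 ∈ crPartition G (k+1) := by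
    by_contra hnm
    rcases hnew2 P2 hP2m hnm with rfl | rfl
    · rw [hR1s, Set.ncard_singleton] at hP2card; omega
    · rw [hR2s, Set.ncard_singleton] at hP2card; omega
  obtain ⟨v₁, v₂, hv12, hP2pair, hS1s, hS2s⟩ := pair_subclasses hP2card hS12u
    (class_nonempty hS1) (class_nonempty hS2) (class_disjoint hS1 hS2 hS12)
  -- P1 is unbalanced with respect to both A and B
  have hu₁P1 : u₁ ∈ P1 := by rw [hP1pair]; exact Set.mem_insert _ _
  have hu₂P1 : u₂ ∈ P1 := by rw [hP1pair]; exact Set.mem_insert_of_mem _ rfl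
  have hrelu : crRel G (k+1) u₁ u₂ := rel_of_mem_class hP1 hu₁P1 hu₂P1
  have hnrelu : ¬ crRel G (k+2) u₁ u₂ := by
    refine not_rel_of_mem_classes hR1 hR2 hR12 ?_ ?_
    · rw [hR1s]; rfl
    · rw [hR2s]; rfl
  obtain ⟨w, hw⟩ := exists_cnt_ne hrelu hnrelu
  have hWnot : crClass G (k+1) w ∉ crPartition G k := by
    intro hmem
    apply hw
    rw [class_eq_crClass hmem (self_mem_crClass (k+1) w)]
    exact cnt_eq_of_rel hrelu w
  have hWAB := hnew1' _ (crClass_mem_crPartition (k+1) w) hWnot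
  have hdAB : Disjoint A B := class_disjoint hA hB hAB
  have hcntC : cnt G u₁ A + cnt G u₁ B = cnt G u₂ A + cnt G u₂ B := by
    have hcc := cnt_eq_on_class hrelu hC
    rwa [hCAB, cnt_union hdAB, cnt_union hdAB] at hcc
  have hABne : cnt G u₁ A ≠ cnt G u₂ A ∧ cnt G u₁ B ≠ cnt G u₂ B := by
    rcases hWAB with heq | heq <;> rw [heq] at hw
    · exact ⟨hw, fun hh => hw (by omega)⟩
    · exact ⟨fun hh => hw (by omega), hw⟩
  -- P2 is unbalanced with respect to both {u₁} and {u₂}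
  have hv₁P2 : v₁ ∈ P2 := by rw [hP2pair]; exact Set.mem_insert _ _
  have hv₂P2 : v₂ ∈ P2 := by rw [hP2pair]; exact Set.mem_insert_of_mem _ rfl
  have hrelv : crRel G (k+2) v₁ v₂ := rel_of_mem_class hP2m hv₁P2 hv₂P2
  have hnrelv : ¬ crRel G (k+3) v₁ v₂ := by
    refine not_rel_of_mem_classes hS1 hS2 hS12 ?_ ?_
    · rw [hS1s]; rfl
    · rw [hS2s]; rfl
  obtain ⟨w', hw'⟩ := exists_cnt_ne hrelv hnrelv
  have hW'not : crClass G (k+2) w' ∉ crPartition G (k+1) := by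
    intro hmem
    apply hw'
    rw [class_eq_crClass hmem (self_mem_crClass (k+2) w')]
    exact cnt_eq_of_rel hrelv w'
  have hW'R := hnew2 _ (crClass_mem_crPartition (k+2) w') hW'not
  have hdR : Disjoint R₁ R₂ := class_disjoint hR1 hR2 hR12
  have hcntP1 : cnt G v₁ R₁ + cnt G v₁ R₂ = cnt G v₂ R₁ + cnt G v₂ R₂ := by
    have hcc := cnt_eq_on_class hrelv hP1
    rwa [← hR12u, cnt_union hdR, cnt_union hdR] at hcc
  have hRne : cnt G v₁ R₁ ≠ cnt G v₂ R₁ ∧ cnt G v₁ R₂ ≠ cnt G v₂ R₂ := by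
    rcases hW'R with heq | heq <;> rw [heq] at hw'
    · exact ⟨hw', fun hh => hw' (by omega)⟩
    · exact ⟨fun hh => hw' (by omega), hw'⟩
  -- each uᵢ has exactly one neighbour in P2
  have hcu₁ : cnt G u₁ P2 = 1 := by
    rw [hP2pair]
    apply cnt_pair_of_singleton_ne hv12
    rw [← hR1s]
    exact hRne.1
  have hcu₂ : cnt G u₂ P2 = 1 := by
    rw [hP2pair]
    apply cnt_pair_of_singleton_ne hv12
    rw [← hR2s]
    exact hRne.2
  -- distinctness
  have hP2A : P2 ≠ A := fun hh => hABne.1 (by rw [← hh]; exact hcu₁.trans hcu₂.symm)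
  have hP2B : P2 ≠ B := fun hh => hABne.2 (by rw [← hh]; exact hcu₁.trans hcu₂.symm)
  have hP1A : P1 ≠ A := fun hh =>
    hABne.1 (by rw [← hh, hP1pair]; exact cnt_pair_self_left hu12)
  have hP1B : P1 ≠ B := fun hh =>
    hABne.2 (by rw [← hh, hP1pair]; exact cnt_pair_self_left hu12)
  have hP1P2 : P1 ≠ P2 := fun hh => hP1not (hh ▸ hP2m)
  -- C has at least 3 elements
  have hCbig : 2 < Y.ncard := by
    obtain ⟨D, hD, hD2⟩ := hpmin k (by omega)
    have hDC : D = Y := by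
      by_contra hne
      have := hp D (hpers1 D hD hne)
      omega
    rwa [hDC] at hD2
  have hCAB' : Y.ncard = A.ncard + B.ncard := by
    rw [hCAB]
    exact Set.ncard_union_eq hdAB (Set.toFinite _) (Set.toFinite _)
  -- the `|A'| = 1, |B'| = 2` configuration is impossible
  have key : ∀ A' B' : Set V, A' ∈ crPartition G (k+1) → B' ∈ crPartition G (k+1) →
      Y = A' ∪ B' → Disjoint A' B' →
      cnt G u₁ A' ≠ cnt G u₂ A' → cnt G u₁ B' ≠ cnt G u₂ B' →
      A'.ncard = 1 → B'.ncard = 2 → False := by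
    intro A' B' hA'm hB'm hCu hd hna hnb ha1 hb2
    obtain ⟨a, hAa⟩ := Set.ncard_eq_one.mp ha1
    obtain ⟨b₁, b₂, hbne, hBb⟩ := Set.ncard_eq_two.mp hb2
    have hBP1 : B' ≠ P1 := fun hh =>
      hnb (by rw [hh, hP1pair]; exact cnt_pair_self_left hu12)
    have hBP2 : B' ≠ P2 := fun hh => hnb (by rw [hh]; exact hcu₁.trans hcu₂.symm)
    have hB2m : B' ∈ crPartition G (k+2) := hpers2 B' hB'm hBP1
    have hB3m : B' ∈ crPartition G (k+3) := hpers3 B' hB2m hBP2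
    have hb₁ : b₁ ∈ B' := by rw [hBb]; exact Set.mem_insert _ _
    have hb₂ : b₂ ∈ B' := by rw [hBb]; exact Set.mem_insert_of_mem _ rfl
    have hrelb : crRel G (k+3) b₁ b₂ := rel_of_mem_class hB3m hb₁ hb₂
    have h1 : cnt G b₁ ({u₁} : Set V) = cnt G b₂ ({u₁} : Set V) := by
      have := cnt_eq_on_class hrelb hR1
      rwa [hR1s] at this
    have h2 : cnt G b₁ ({u₂} : Set V) = cnt G b₂ ({u₂} : Set V) := by
      have := cnt_eq_on_class hrelb hR2
      rwa [hR2s] at this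
    have e1 : cnt G u₁ B' = 0 ∨ cnt G u₁ B' = 2 := by
      rw [hBb, cnt_pair hbne]
      rw [cnt_singleton, cnt_singleton] at h1
      rw [G.adj_comm u₁ b₁, G.adj_comm u₁ b₂]
      by_cases hx : G.Adj b₁ u₁ <;> by_cases hy : G.Adj b₂ u₁ <;>
        simp [hx, hy] at h1 ⊢
    have e2 : cnt G u₂ B' = 0 ∨ cnt G u₂ B' = 2 := by
      rw [hBb, cnt_pair hbne]
      rw [cnt_singleton, cnt_singleton] at h2
      rw [G.adj_comm u₂ b₁, G.adj_comm u₂ b₂]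
      by_cases hx : G.Adj b₁ u₂ <;> by_cases hy : G.Adj b₂ u₂ <;>
        simp [hx, hy] at h2 ⊢
    have fa1 : cnt G u₁ A' ≤ 1 := by rw [hAa]; exact cnt_singleton_le_one u₁ a
    have fa2 : cnt G u₂ A' ≤ 1 := by rw [hAa]; exact cnt_singleton_le_one u₂ a
    have hsum : cnt G u₁ A' + cnt G u₁ B' = cnt G u₂ A' + cnt G u₂ B' := by
      have hcc := cnt_eq_on_class hrelu hC
      rwa [hCu, cnt_union hd, cnt_union hd] at hcc
    rcases e1 with e1 | e1 <;> rcases e2 with e2 | e2 <;> omega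
  -- hence both A and B are pairs
  have hA1 : 1 ≤ A.ncard := (Set.ncard_pos (Set.toFinite _)).mpr (class_nonempty hA)
  have hB1 : 1 ≤ B.ncard := (Set.ncard_pos (Set.toFinite _)).mpr (class_nonempty hB)
  have hA2le := hp A hA
  have hB2le := hp B hB
  have hA2 : A.ncard = 2 := by
    by_contra hne
    have ha1 : A.ncard = 1 := by omega
    have hb2 : B.ncard = 2 := by omega
    exact key A B hA hB hCAB hdAB hABne.1 hABne.2 ha1 hb2
  have hB2 : B.ncard = 2 := by
    by_contra hne
    have hb1 : B.ncard = 1 := by omega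
    have ha2 : A.ncard = 2 := by omega
    exact key B A hB hA (hCAB.trans (Set.union_comm A B)) hdAB.symm hABne.2 hABne.1 hb1 ha2
  -- finish: four distinct pairs in π^p
  refine ⟨hP2A, hP2B, ?_⟩
  have hsub : ({A, B, P1, P2} : Set (Set V)) ⊆
      {D | D ∈ crPartition G (k+1) ∧ D.ncard = 2} := by
    rintro D (rfl | rfl | rfl | rfl)
    · exact ⟨hA, hA2⟩
    · exact ⟨hB, hB2⟩
    · exact ⟨hP1, hP1card⟩
    · exact ⟨hP2mem1, hP2card⟩
  have hnm1 : A ∉ ({B, P1, P2} : Set (Set V)) := by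
    simp only [Set.mem_insert_iff, Set.mem_singleton_iff]
    push_neg
    exact ⟨hAB, fun hh => hP1A hh.symm, fun hh => hP2A hh.symm⟩
  have hnm2 : B ∉ ({P1, P2} : Set (Set V)) := by
    simp only [Set.mem_insert_iff, Set.mem_singleton_iff]
    push_neg
    exact ⟨fun hh => hP1B hh.symm, fun hh => hP2B hh.symm⟩
  have hcard4 : ({A, B, P1, P2} : Set (Set V)).ncard = 4 := by
    rw [Set.ncard_insert_of_notMem hnm1 (Set.toFinite _),
      Set.ncard_insert_of_notMem hnm2 (Set.toFinite _), Set.ncard_pair hP1P2]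
  calc (4 : ℕ) = ({A, B, P1, P2} : Set (Set V)).ncard := hcard4.symm
    _ ≤ _ := Set.ncard_le_ncard hsub (Set.toFinite _)
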